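/- Let ρ₁₀, ρ₂₀ be positive real constants with ρ₁₀ ≠ ρ₂₀, let ρ₁, ρ₂ > 0 satisfy ρ₁/ρ₁₀ + ρ₂/ρ₂₀ = 1, and set ρ = ρ₁ + ρ₂, α = ρ₁/ρ₁₀, c = ρ₁/ρ. Let v₁, v₂, g be vectors in ℝⁿ and λ ∈ ℝ, and define the mean volume velocity v = α v₁ + (1 − α) v₂ and the mean mass velocity w = c v₁ + (1 − c) v₂. If the generalized Fick law v₁ = w − (λ/c) g holds, then ρ₁ρ₂₀ + ρ₂ρ₁₀ = ρ₁₀ρ₂₀ and w = v + (λ/c) · (ρ₁(ρ₂₀ − ρ₁₀)/(ρ₁₀ ρ₂₀)) · g. -/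

import Mathlib

/-- **Mean mass velocity via the generalized Fick law.**
Let `ρ₁₀, ρ₂₀ > 0` with `ρ₁₀ ≠ ρ₂₀`, let `ρ₁, ρ₂ > 0` satisfy `ρ₁/ρ₁₀ + ρ₂/ρ₂₀ = 1`,
and set `ρ = ρ₁ + ρ₂`, `α = ρ₁/ρ₁₀`, `c = ρ₁/ρ`.  Let `v₁, v₂, g ∈ ℝⁿ` and `λ ∈ ℝ`,
and define `v = α v₁ + (1 − α) v₂`, `w = c v₁ + (1 − c) v₂`.  If the generalized Fick
law `v₁ = w − (λ/c) g` holds, then `ρ₁ρ₂₀ + ρ₂ρ₁₀ = ρ₁₀ρ₂₀` and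
`w = v + (λ/c) · (ρ₁(ρ₂₀ − ρ₁₀)/(ρ₁₀ρ₂₀)) · g`. -/
theorem mean_mass_velocity_fick
    (n : ℕ) (ρ₁₀ ρ₂₀ ρ₁ ρ₂ lam : ℝ)
    (h₁₀ : 0 < ρ₁₀) (h₂₀ : 0 < ρ₂₀) (hne : ρ₁₀ ≠ ρ₂₀)
    (h₁ : 0 < ρ₁) (h₂ : 0 < ρ₂)
    (hvol : ρ₁ / ρ₁₀ + ρ₂ / ρ₂₀ = 1)
    (v₁ v₂ g : EuclideanSpace ℝ (Fin n))
    (ρ α c : ℝ) (hρ : ρ = ρ₁ + ρ₂) (hα : α = ρ₁ / ρ₁₀) (hc : c = ρ₁ / ρ)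
    (v w : EuclideanSpace ℝ (Fin n))
    (hv : v = α • v₁ + (1 - α) • v₂) (hw : w = c • v₁ + (1 - c) • v₂)
    (hFick : v₁ = w - (lam / c) • g) :
    ρ₁ * ρ₂₀ + ρ₂ * ρ₁₀ = ρ₁₀ * ρ₂₀
    ∧ w = v + ((lam / c) * (ρ₁ * (ρ₂₀ - ρ₁₀) / (ρ₁₀ * ρ₂₀))) • g := by
  have hρpos : 0 < ρ := by rw [hρ]; linarith
  have hρne : ρ ≠ 0 := ne_of_gt hρpos
  have hcpos : 0 < c := by rw [hc]; positivity
  have hcne : c ≠ 0 := ne_of_gt hcpos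
  have hc1 : c < 1 := by
    rw [hc, div_lt_one hρpos, hρ]; linarith
  have h1c : (1 : ℝ) - c ≠ 0 := by linarith
  have hvol' : ρ₁ * ρ₂₀ + ρ₂ * ρ₁₀ = ρ₁₀ * ρ₂₀ := by
    field_simp at hvol; linarith
  refine ⟨hvol', ?_⟩
  set t := lam / c with ht
  have h' : w = c • (w - t • g) + (1 - c) • v₂ := by rw [← hFick]; exact hw
  have e0 : (1 - c) • (w - v₂) = (-(c * t)) • g := by
    linear_combination (norm := module) h'
  have e1 : w = v₂ + (-(c * t) / (1 - c)) • g := by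
    have h2 := congrArg (fun x => (1 - c)⁻¹ • x) e0
    simp only [smul_smul, inv_mul_cancel₀ h1c, one_smul] at h2
    rw [div_eq_inv_mul, ← h2]
    abel
  have e3 : v = v₂ + (α * (-(c * t) / (1 - c) - t)) • g := by
    rw [hv, hFick, e1]
    module
  have key : -(c * t) / (1 - c)
      = α * (-(c * t) / (1 - c) - t) + t * (ρ₁ * (ρ₂₀ - ρ₁₀) / (ρ₁₀ * ρ₂₀)) := by
    have h1c' : (1 : ℝ) - c = ρ₂ / ρ := by rw [hc, hρ]; field_simp; ring
    have hd : ρ₁₀ - ρ₁ > 0 := by nlinarith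
    have hρ₂ : ρ₂ = ρ₂₀ * (ρ₁₀ - ρ₁) / ρ₁₀ := by field_simp; linarith [hvol']
    rw [hα, h1c', hc, hρ₂]
    field_simp
    ring
  rw [e1, e3, add_assoc, ← add_smul]
  exact congrArg (fun s : ℝ => v₂ + s • g) key
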